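/- Let v₀ > 0, let u : ℝ² → ℝ² be a twice continuously differentiable divergence-free vector field, let (r*, θ*) be an equilibrium of the front-element dynamics, let μ ≠ 0 satisfy Du(r*) ĝ(θ*) = μ ĝ(θ*), and set μ' := (2μ² − v₀ Σ_{i,j,k} n̂ᵢ(θ*) ĝⱼ(θ*) ĝₖ(θ*) ∂ⱼ∂ₖuᵢ(r*))/μ. Let J be the Jacobian matrix at (r*, θ*) of the field F(r, θ) = (u(r) + v₀ n̂(θ), −n̂(θ)·(Du(r) ĝ(θ))). Assume μ' ≠ 0. Then: if μ > 0 and μ' > 0, exactly one (complex) eigenvalue of J has positive real part and two have negative real part (type SSU); if μ > 0 and μ' < 0, all three eigenvalues have negative real part (type SSS); if μ < 0 and μ' > 0, all three eigenvalues have positive real part (type UUU); if μ < 0 and μ' < 0, exactly one eigenvalue has negative real part and two have positive real part (type SUU). -/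

import Mathlib

noncomputable section

open Real Polynomial

/-- Points in the plane, with the Euclidean norm. -/
abbrev Pt : Type := EuclideanSpace ℝ (Fin 2)

/-- Build a point of the plane from two coordinates. -/
def vec2 (a b : ℝ) : Pt := (WithLp.equiv 2 (Fin 2 → ℝ)).symm ![a, b]

/-- Front tangent direction ĝ(θ) = (cos θ, sin θ). -/
def ghat (θ : ℝ) : Pt := vec2 (Real.cos θ) (Real.sin θ)

/-- Front normal (burning) direction n̂(θ) = (sin θ, −cos θ). -/
def nhat (θ : ℝ) : Pt := vec2 (Real.sin θ) (-(Real.cos θ))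

/-- Euclidean dot product on the plane. -/
def dot (v w : Pt) : ℝ := v 0 * w 0 + v 1 * w 1

/-- The Jacobian matrix Du(r) of a planar vector field. -/
def jacOf (u : Pt → Pt) (r : Pt) : Matrix (Fin 2) (Fin 2) ℝ :=
  fun i j => fderiv ℝ u r (EuclideanSpace.single j 1) i

/-- Action of a 2×2 matrix on a point of the plane. -/
def mulVec2 (M : Matrix (Fin 2) (Fin 2) ℝ) (v : Pt) : Pt :=
  vec2 (M 0 0 * v 0 + M 0 1 * v 1) (M 1 0 * v 0 + M 1 1 * v 1)

/-- The three-dimensional front-element vector field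
    F(r, θ) = (u(r) + v₀ n̂(θ), −n̂(θ)·(Du(r) ĝ(θ))). -/
def frontField (v₀ : ℝ) (u : Pt → Pt) (q : Pt × ℝ) : Pt × ℝ :=
  (u q.1 + v₀ • nhat q.2, -(dot (nhat q.2) (mulVec2 (jacOf u q.1) (ghat q.2))))

/-- The standard basis of ℝ² × ℝ ≃ ℝ³. -/
def basis3 : Fin 3 → Pt × ℝ :=
  ![(EuclideanSpace.single 0 1, 0), (EuclideanSpace.single 1 1, 0), ((0 : Pt), 1)]

/-- Components of a vector in ℝ² × ℝ ≃ ℝ³. -/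
def comp3 (p : Pt × ℝ) : Fin 3 → ℝ := ![p.1 0, p.1 1, p.2]

/-- The 3×3 Jacobian matrix of the front-element field at a point of ℝ² × ℝ. -/
def jac3 (v₀ : ℝ) (u : Pt → Pt) (q : Pt × ℝ) : Matrix (Fin 3) (Fin 3) ℝ :=
  fun i j => comp3 (fderiv ℝ (frontField v₀ u) q (basis3 j)) i

/-- Second partial derivative ∂ⱼ∂ₖuᵢ(r). -/
def d2 (u : Pt → Pt) (r : Pt) (i j k : Fin 2) : ℝ :=
  fderiv ℝ (fun x => fderiv ℝ u x (EuclideanSpace.single k 1) i) r (EuclideanSpace.single j 1)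

/-- Divergence-free: ∂₁u₁ + ∂₂u₂ = 0 everywhere. -/
def divFree (u : Pt → Pt) : Prop := ∀ r : Pt, jacOf u r 0 0 + jacOf u r 1 1 = 0

/-- Rotation of a planar vector by +π/2. -/
def perp (v : Pt) : Pt := vec2 (-(v 1)) (v 0)

/-- The velocity field generated by a stream function: u = (∂Ψ/∂y, −∂Ψ/∂x). -/
def uOf (Ψ : Pt → ℝ) (x : Pt) : Pt :=
  vec2 (fderiv ℝ Ψ x (EuclideanSpace.single 1 1)) (-(fderiv ℝ Ψ x (EuclideanSpace.single 0 1)))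

/-- Polar angle of a point of the plane. -/
def angOf (x : Pt) : ℝ := Complex.arg ⟨x 0, x 1⟩

/-! ### Auxiliary material -/

@[simp] lemma vec2_app0 (a b : ℝ) : vec2 a b 0 = a := rfl
@[simp] lemma vec2_app1 (a b : ℝ) : vec2 a b 1 = b := rfl

def toPt : (Fin 2 → ℝ) ≃L[ℝ] Pt := (PiLp.continuousLinearEquiv 2 ℝ (fun _ : Fin 2 => ℝ)).symm

lemma toPt_vec (a b : ℝ) : (toPt : (Fin 2 → ℝ) →L[ℝ] Pt) ![a, b] = vec2 a b := rfl

lemma hasDerivAt_nhat (θ : ℝ) : HasDerivAt nhat (ghat θ) θ := by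
  have h : HasDerivAt (fun θ => (![Real.sin θ, -(Real.cos θ)] : Fin 2 → ℝ))
      (![Real.cos θ, Real.sin θ]) θ := by
    refine hasDerivAt_pi.2 fun i => ?_
    fin_cases i
    · simpa using Real.hasDerivAt_sin θ
    · simpa using (Real.hasDerivAt_cos θ).fun_neg
  have := ((toPt : (Fin 2 → ℝ) →L[ℝ] Pt).hasFDerivAt).comp_hasDerivAt θ h
  exact this

def coord (i : Fin 2) : Pt →L[ℝ] ℝ :=
  (ContinuousLinearMap.proj i).comp (toPt.symm : Pt →L[ℝ] (Fin 2 → ℝ))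
@[simp] lemma coord_apply (i : Fin 2) (x : Pt) : coord i x = x i := rfl

section Jac
variable (v₀ : ℝ) (u : Pt → Pt) (rs : Pt) (θs : ℝ)

def Dd (u : Pt → Pt) (rs : Pt) (i j : Fin 2) : Pt →L[ℝ] ℝ :=
  fderiv ℝ (fun x => fderiv ℝ u x (EuclideanSpace.single j 1) i) rs

lemma Dd_single (i j k : Fin 2) : Dd u rs i j (EuclideanSpace.single k 1) = d2 u rs i k j := rfl

lemma hasFDerivAt_entry (hu : ContDiff ℝ 2 u) (i j : Fin 2) :
    HasFDerivAt (fun x => fderiv ℝ u x (EuclideanSpace.single j 1) i) (Dd u rs i j) rs := by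
  have hG : DifferentiableAt ℝ (fderiv ℝ u) rs :=
    ((hu.fderiv_right (m := 1) (by norm_num)).differentiable (by norm_num)) rs
  have h1 : DifferentiableAt ℝ (fun x => fderiv ℝ u x (EuclideanSpace.single j 1)) rs :=
    hG.clm_apply (differentiableAt_const _)
  have h2 : DifferentiableAt ℝ (fun x => fderiv ℝ u x (EuclideanSpace.single j 1) i) rs := by
    have := ((coord i).differentiableAt (x := fderiv ℝ u rs (EuclideanSpace.single j 1))).comp rs h1
    exact this
  exact h2.hasFDerivAt

set_option maxHeartbeats 1000000 in
lemma jac3_eq (hu : ContDiff ℝ 2 u) :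
    jac3 v₀ u (rs, θs) = Matrix.of ![
      ![jacOf u rs 0 0, jacOf u rs 0 1, v₀ * Real.cos θs],
      ![jacOf u rs 1 0, jacOf u rs 1 1, v₀ * Real.sin θs],
      ![-(Real.sin θs * (d2 u rs 0 0 0 * Real.cos θs + d2 u rs 0 0 1 * Real.sin θs)
          - Real.cos θs * (d2 u rs 1 0 0 * Real.cos θs + d2 u rs 1 0 1 * Real.sin θs)),
        -(Real.sin θs * (d2 u rs 0 1 0 * Real.cos θs + d2 u rs 0 1 1 * Real.sin θs)
          - Real.cos θs * (d2 u rs 1 1 0 * Real.cos θs + d2 u rs 1 1 1 * Real.sin θs)),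
        -(Real.cos θs * (jacOf u rs 0 0 * Real.cos θs + jacOf u rs 0 1 * Real.sin θs)
          + Real.sin θs * (jacOf u rs 0 1 * Real.cos θs - jacOf u rs 0 0 * Real.sin θs)
          + Real.sin θs * (jacOf u rs 1 0 * Real.cos θs + jacOf u rs 1 1 * Real.sin θs)
          - Real.cos θs * (jacOf u rs 1 1 * Real.cos θs - jacOf u rs 1 0 * Real.sin θs))]] := by
  have hud : Differentiable ℝ u := hu.differentiable (by norm_num)
  set q₀ : Pt × ℝ := (rs, θs) with hq₀
  have hsin : HasFDerivAt (fun q : Pt × ℝ => Real.sin q.2)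
      (Real.cos θs • ContinuousLinearMap.snd ℝ Pt ℝ) q₀ := by
    simpa [Function.comp_def] using (Real.hasDerivAt_sin θs).comp_hasFDerivAt q₀ (hasFDerivAt_snd (𝕜 := ℝ) (p := q₀))
  have hcos : HasFDerivAt (fun q : Pt × ℝ => Real.cos q.2)
      ((-Real.sin θs) • ContinuousLinearMap.snd ℝ Pt ℝ) q₀ := by
    exact (Real.hasDerivAt_cos θs).comp_hasFDerivAt q₀ (hasFDerivAt_snd (𝕜 := ℝ) (p := q₀))
  have hAf : ∀ i j : Fin 2, HasFDerivAt (fun q : Pt × ℝ => fderiv ℝ u q.1 (EuclideanSpace.single j 1) i)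
      ((Dd u rs i j).comp (ContinuousLinearMap.fst ℝ Pt ℝ)) q₀ := fun i j => by
    simpa [Function.comp_def] using (hasFDerivAt_entry u rs hu i j).comp q₀ (hasFDerivAt_fst (𝕜 := ℝ) (p := q₀))
  have hφ := (((hsin.fun_mul (((hAf 0 0).fun_mul hcos).fun_add ((hAf 0 1).fun_mul hsin))).fun_add
      ((hcos.fun_neg).fun_mul (((hAf 1 0).fun_mul hcos).fun_add ((hAf 1 1).fun_mul hsin)))).fun_neg)
  have hF₁ := (((hud rs).hasFDerivAt.comp q₀ (hasFDerivAt_fst (𝕜 := ℝ) (p := q₀))).fun_add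
      ((((hasDerivAt_nhat θs).hasFDerivAt.comp q₀ (hasFDerivAt_snd (𝕜 := ℝ) (p := q₀)))).fun_const_smul v₀))
  have hF := hF₁.prodMk hφ
  have hfe : frontField v₀ u = (fun q : Pt × ℝ =>
      ((u ∘ Prod.fst) q + v₀ • (nhat ∘ Prod.snd) q,
        -((fun q : Pt × ℝ => Real.sin q.2) q *
            ((fun q : Pt × ℝ => fderiv ℝ u q.1 (EuclideanSpace.single 0 1) 0) q * Real.cos q.2 +
             (fun q : Pt × ℝ => fderiv ℝ u q.1 (EuclideanSpace.single 1 1) 0) q * Real.sin q.2) +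
          -(Real.cos q.2) *
            ((fun q : Pt × ℝ => fderiv ℝ u q.1 (EuclideanSpace.single 0 1) 1) q * Real.cos q.2 +
             (fun q : Pt × ℝ => fderiv ℝ u q.1 (EuclideanSpace.single 1 1) 1) q * Real.sin q.2)))) := by
    funext q
    simp only [frontField, Function.comp, dot, mulVec2, jacOf, nhat, ghat, vec2_app0, vec2_app1]
    try ring_nf
  rw [← hfe] at hF
  have hfd := hF.fderiv
  funext i j
  show comp3 (fderiv ℝ (frontField v₀ u) q₀ (basis3 j)) i = _
  rw [hfd]
  fin_cases i <;> fin_cases j <;>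
    simp [basis3, comp3, jacOf, Dd_single, ghat, nhat, Matrix.of_apply,
      PiLp.add_apply, PiLp.smul_apply, smul_eq_mul, ContinuousLinearMap.smulRight_apply,
      ContinuousLinearMap.one_apply] <;> ring
end Jac

lemma charpoly_fac (a b a' w0 w1 c s v₀ μ μ' : ℝ)
    (h3 : c ^ 2 + s ^ 2 = 1)
    (h1 : a * c + b * s = μ * c)
    (h2 : a' * c - a * s = μ * s)
    (h4 : v₀ * (c * w0 + s * w1) = μ * μ' - 2 * μ ^ 2) :
    (Matrix.of ![![a, b, v₀ * c], ![a', -a, v₀ * s], ![w0, w1, -(2 * μ)]]).charpoly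
      = (X + C μ) * (X ^ 2 + C μ * X - C (μ * μ')) := by
  have hI : a ^ 2 + a' * b = μ ^ 2 := by
    linear_combination (a*c + a'*s + μ*c) * h1 + (b*c - a*s + μ*s) * h2 - (a^2 + a'*b - μ^2) * h3
  have hC1 := congrArg (Polynomial.C : ℝ → ℝ[X]) h1
  have hC2 := congrArg (Polynomial.C : ℝ → ℝ[X]) h2
  have hC4 := congrArg (Polynomial.C : ℝ → ℝ[X]) h4
  have hCI := congrArg (Polynomial.C : ℝ → ℝ[X]) hI
  simp only [map_add, map_sub, map_mul, map_pow, map_ofNat, map_neg, map_one] at hC1 hC2 hC4 hCI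
  rw [Matrix.charpoly, Matrix.det_fin_three]
  simp only [Matrix.charmatrix_apply, Matrix.diagonal_apply, Matrix.of_apply,
    Matrix.cons_val', Matrix.cons_val_zero, Matrix.cons_val_one, Matrix.head_cons,
    Matrix.empty_val', Matrix.cons_val_fin_one, Matrix.head_fin_const, Matrix.cons_val_two,
    Matrix.tail_cons]
  norm_num [Fin.ext_iff, map_ofNat]
  linear_combination (-(X : ℝ[X]) - 2 * C μ) * hCI - C v₀ * C w0 * hC1 - C v₀ * C w1 * hC2
    - ((X : ℝ[X]) + C μ) * hC4

lemma card_filter_triple (p : ℂ → Prop) [DecidablePred p] (a b c : ℂ) :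
    Multiset.card (Multiset.filter p {a, b, c}) =
      (if p a then 1 else 0) + ((if p b then 1 else 0) + (if p c then 1 else 0)) := by
  show Multiset.card (Multiset.filter p (a ::ₘ b ::ₘ {c})) = _
  rw [Multiset.filter_cons, Multiset.filter_cons, Multiset.filter_singleton]
  split_ifs <;> simp

lemma quad_fac (μ μ' : ℝ) (z₁ z₂ : ℂ) (hsum : z₁ + z₂ = (-μ : ℂ))
    (hprod : z₁ * z₂ = (-(μ * μ') : ℂ)) :
    ((X + C μ) * (X ^ 2 + C μ * X - C (μ * μ'))).map (algebraMap ℝ ℂ)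
      = (X - C (-μ : ℂ)) * ((X - C z₁) * (X - C z₂)) := by
  simp only [Polynomial.map_mul, Polynomial.map_add, Polynomial.map_sub, Polynomial.map_pow,
    Polynomial.map_X, Polynomial.map_C]
  have e1 : (algebraMap ℝ ℂ) μ = (μ : ℂ) := rfl
  have e2 : (algebraMap ℝ ℂ) (μ * μ') = ((μ : ℂ) * (μ' : ℂ)) := by
    simp [Complex.ofReal_mul]
  rw [e1, e2]
  simp only [map_neg, map_mul]
  have hs' : C z₁ + C z₂ = -C (μ : ℂ) := by
    rw [← map_add, hsum]; simp
  have hp' : C z₁ * C z₂ = -(C (μ : ℂ) * C (μ' : ℂ)) := by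
    rw [← map_mul, hprod]; simp
  linear_combination (X + C (μ:ℂ)) * X * hs' - (X + C (μ:ℂ)) * hp'

lemma roots_of_fac (μ μ' : ℝ) (z₁ z₂ : ℂ) (hsum : z₁ + z₂ = (-μ : ℂ))
    (hprod : z₁ * z₂ = (-(μ * μ') : ℂ)) :
    (((X + C μ) * (X ^ 2 + C μ * X - C (μ * μ'))).map (algebraMap ℝ ℂ)).roots
      = {(-μ : ℂ), z₁, z₂} := by
  rw [quad_fac μ μ' z₁ z₂ hsum hprod]
  rw [Polynomial.roots_mul (mul_ne_zero (X_sub_C_ne_zero _)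
        (mul_ne_zero (X_sub_C_ne_zero _) (X_sub_C_ne_zero _))),
      Polynomial.roots_mul (mul_ne_zero (X_sub_C_ne_zero _) (X_sub_C_ne_zero _)),
      roots_X_sub_C, roots_X_sub_C, roots_X_sub_C]
  rfl

lemma roots_cubic (μ μ' : ℝ) :
    ∃ z₁ z₂ : ℂ,
      (((X + C μ) * (X ^ 2 + C μ * X - C (μ * μ'))).map (algebraMap ℝ ℂ)).roots
          = {(-μ : ℂ), z₁, z₂} ∧
      ((μ ^ 2 + 4 * (μ * μ') < 0 → z₁.re = -μ / 2 ∧ z₂.re = -μ / 2) ∧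
       (0 ≤ μ ^ 2 + 4 * (μ * μ') →
          z₁ = ((-μ + √(μ ^ 2 + 4 * (μ * μ'))) / 2 : ℝ) ∧
          z₂ = ((-μ - √(μ ^ 2 + 4 * (μ * μ'))) / 2 : ℝ))) := by
  set Δ : ℝ := μ ^ 2 + 4 * (μ * μ') with hΔ
  rcases le_or_gt 0 Δ with h | h
  · refine ⟨((-μ + √Δ) / 2 : ℝ), ((-μ - √Δ) / 2 : ℝ), ?_,
      fun h' => absurd h (not_le.2 h'), fun _ => ⟨rfl, rfl⟩⟩
    have hsq : (√Δ : ℝ) ^ 2 = μ ^ 2 + 4 * (μ * μ') := by rw [Real.sq_sqrt h, hΔ]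
    refine roots_of_fac μ μ' _ _ (by push_cast; ring) ?_
    have hsq'' : ((√Δ : ℝ) : ℂ) ^ 2 = (μ:ℂ) ^ 2 + 4 * ((μ:ℂ) * (μ':ℂ)) := by
      exact_mod_cast congrArg Complex.ofReal hsq
    push_cast
    linear_combination (-1/4 : ℂ) * hsq''
  · refine ⟨(↑(-μ / 2) + ↑(√(-Δ) / 2) * Complex.I), (↑(-μ / 2) - ↑(√(-Δ) / 2) * Complex.I),
      ?_, fun _ => ⟨by simp, by simp⟩, fun h' => absurd h (not_lt.2 h')⟩
    have hsq : (√(-Δ) : ℝ) ^ 2 = -(μ ^ 2 + 4 * (μ * μ')) := by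
      rw [Real.sq_sqrt (by linarith), hΔ]
    refine roots_of_fac μ μ' _ _ (by push_cast; ring) ?_
    have hsq'' : ((√(-Δ) : ℝ) : ℂ) ^ 2 = -((μ:ℂ) ^ 2 + 4 * ((μ:ℂ) * (μ':ℂ))) := by
      exact_mod_cast congrArg Complex.ofReal hsq
    push_cast
    linear_combination (-(((√(-Δ):ℝ):ℂ)) ^ 2 / 4) * Complex.I_sq + (1/4 : ℂ) * hsq''

lemma cubic_count (μ μ' : ℝ) :
    let E := (((X + C μ) * (X ^ 2 + C μ * X - C (μ * μ'))).map (algebraMap ℝ ℂ)).roots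
    ((0 < μ ∧ 0 < μ' →
        Multiset.card (E.filter (fun z => 0 < z.re)) = 1 ∧
        Multiset.card (E.filter (fun z => z.re < 0)) = 2) ∧
     (0 < μ ∧ μ' < 0 →
        Multiset.card (E.filter (fun z => z.re < 0)) = 3) ∧
     (μ < 0 ∧ 0 < μ' →
        Multiset.card (E.filter (fun z => 0 < z.re)) = 3) ∧
     (μ < 0 ∧ μ' < 0 →
        Multiset.card (E.filter (fun z => z.re < 0)) = 1 ∧
        Multiset.card (E.filter (fun z => 0 < z.re)) = 2)) := by
  obtain ⟨z₁, z₂, hroots, hneg, hpos⟩ := roots_cubic μ μ'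
  intro E
  have hE : E = {(-μ : ℂ), z₁, z₂} := hroots
  rw [hE]
  have hre : (-(μ:ℂ)).re = -μ := by simp
  refine ⟨?_, ?_, ?_, ?_⟩
  · rintro ⟨h1, h2⟩
    have hΔ : 0 ≤ μ ^ 2 + 4 * (μ * μ') := by positivity
    obtain ⟨e1, e2⟩ := hpos hΔ
    have hlt : μ < √(μ ^ 2 + 4 * (μ * μ')) := by
      calc μ = √(μ ^ 2) := by rw [Real.sqrt_sq h1.le]
      _ < _ := Real.sqrt_lt_sqrt (by positivity) (by nlinarith)
    have r1 : z₁.re = (-μ + √(μ ^ 2 + 4 * (μ * μ'))) / 2 := by rw [e1]; simp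
    have r2 : z₂.re = (-μ - √(μ ^ 2 + 4 * (μ * μ'))) / 2 := by rw [e2]; simp
    constructor
    · rw [card_filter_triple]
      rw [if_neg (by rw [hre]; linarith), if_pos (by rw [r1]; linarith),
        if_neg (by rw [r2]; push_neg; nlinarith)]
    · rw [card_filter_triple]
      rw [if_pos (by rw [hre]; linarith), if_neg (by rw [r1]; push_neg; linarith),
        if_pos (by rw [r2]; nlinarith)]
  · rintro ⟨h1, h2⟩
    rcases le_or_gt 0 (μ ^ 2 + 4 * (μ * μ')) with hΔ | hΔ
    · obtain ⟨e1, e2⟩ := hpos hΔ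
      have hs0 : 0 ≤ √(μ ^ 2 + 4 * (μ * μ')) := Real.sqrt_nonneg _
      have hlt : √(μ ^ 2 + 4 * (μ * μ')) < μ := by
        calc √(μ ^ 2 + 4 * (μ * μ')) < √(μ ^ 2) := Real.sqrt_lt_sqrt hΔ (by nlinarith)
        _ = μ := Real.sqrt_sq h1.le
      have r1 : z₁.re = (-μ + √(μ ^ 2 + 4 * (μ * μ'))) / 2 := by rw [e1]; simp
      have r2 : z₂.re = (-μ - √(μ ^ 2 + 4 * (μ * μ'))) / 2 := by rw [e2]; simp
      rw [card_filter_triple, if_pos (by rw [hre]; linarith),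
        if_pos (by rw [r1]; linarith), if_pos (by rw [r2]; linarith)]
    · obtain ⟨e1, e2⟩ := hneg hΔ
      rw [card_filter_triple, if_pos (by rw [hre]; linarith),
        if_pos (by rw [e1]; linarith), if_pos (by rw [e2]; linarith)]
  · rintro ⟨h1, h2⟩
    rcases le_or_gt 0 (μ ^ 2 + 4 * (μ * μ')) with hΔ | hΔ
    · obtain ⟨e1, e2⟩ := hpos hΔ
      have hs0 : 0 ≤ √(μ ^ 2 + 4 * (μ * μ')) := Real.sqrt_nonneg _
      have hlt : √(μ ^ 2 + 4 * (μ * μ')) < -μ := by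
        calc √(μ ^ 2 + 4 * (μ * μ')) < √(μ ^ 2) := Real.sqrt_lt_sqrt hΔ (by nlinarith)
        _ = -μ := by rw [Real.sqrt_sq_eq_abs, abs_of_neg h1]
      have r1 : z₁.re = (-μ + √(μ ^ 2 + 4 * (μ * μ'))) / 2 := by rw [e1]; simp
      have r2 : z₂.re = (-μ - √(μ ^ 2 + 4 * (μ * μ'))) / 2 := by rw [e2]; simp
      rw [card_filter_triple, if_pos (by rw [hre]; linarith),
        if_pos (by rw [r1]; linarith), if_pos (by rw [r2]; linarith)]
    · obtain ⟨e1, e2⟩ := hneg hΔ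
      rw [card_filter_triple, if_pos (by rw [hre]; linarith),
        if_pos (by rw [e1]; linarith), if_pos (by rw [e2]; linarith)]
  · rintro ⟨h1, h2⟩
    have hΔ : 0 ≤ μ ^ 2 + 4 * (μ * μ') := by nlinarith
    obtain ⟨e1, e2⟩ := hpos hΔ
    have hlt : -μ < √(μ ^ 2 + 4 * (μ * μ')) := by
      calc -μ = √(μ ^ 2) := by rw [Real.sqrt_sq_eq_abs, abs_of_neg h1]
      _ < _ := Real.sqrt_lt_sqrt (by positivity) (by nlinarith)
    have r1 : z₁.re = (-μ + √(μ ^ 2 + 4 * (μ * μ'))) / 2 := by rw [e1]; simp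
    have r2 : z₂.re = (-μ - √(μ ^ 2 + 4 * (μ * μ'))) / 2 := by rw [e2]; simp
    constructor
    · rw [card_filter_triple, if_neg (by rw [hre]; push_neg; linarith),
        if_neg (by rw [r1]; push_neg; linarith), if_pos (by rw [r2]; linarith)]
    · rw [card_filter_triple, if_pos (by rw [hre]; linarith),
        if_pos (by rw [r1]; linarith), if_neg (by rw [r2]; push_neg; linarith)]

/-- Stability classification of a burning fixed point by the signs
of μ and μ': counting (with algebraic multiplicity over ℂ) the eigenvalues of the
Jacobian of the front-element field that have positive/negative real part. -/
theorem bfp_stability_classification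
    (v₀ : ℝ) (hv₀ : 0 < v₀) (u : Pt → Pt) (hu : ContDiff ℝ 2 u) (hdiv : divFree u)
    (rs : Pt) (θs : ℝ) (heq : frontField v₀ u (rs, θs) = 0)
    (μ : ℝ) (hμ0 : μ ≠ 0) (hμ : mulVec2 (jacOf u rs) (ghat θs) = μ • ghat θs)
    (μ' : ℝ)
    (hμ' : μ' = (2 * μ ^ 2 - v₀ * ∑ i : Fin 2, ∑ j : Fin 2, ∑ k : Fin 2,
      nhat θs i * ghat θs j * ghat θs k * d2 u rs i j k) / μ)
    (hμ'0 : μ' ≠ 0) :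
    let E := (((jac3 v₀ u (rs, θs)).charpoly).map (algebraMap ℝ ℂ)).roots
    ((0 < μ ∧ 0 < μ' →
        Multiset.card (E.filter (fun z => 0 < z.re)) = 1 ∧
        Multiset.card (E.filter (fun z => z.re < 0)) = 2) ∧
     (0 < μ ∧ μ' < 0 →
        Multiset.card (E.filter (fun z => z.re < 0)) = 3) ∧
     (μ < 0 ∧ 0 < μ' →
        Multiset.card (E.filter (fun z => 0 < z.re)) = 3) ∧
     (μ < 0 ∧ μ' < 0 →
        Multiset.card (E.filter (fun z => z.re < 0)) = 1 ∧
        Multiset.card (E.filter (fun z => 0 < z.re)) = 2)) := by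
  have h3 : Real.cos θs ^ 2 + Real.sin θs ^ 2 = 1 := by
    nlinarith [Real.sin_sq_add_cos_sq θs]
  have h1 : jacOf u rs 0 0 * Real.cos θs + jacOf u rs 0 1 * Real.sin θs = μ * Real.cos θs := by
    simpa [mulVec2, ghat] using congrArg (fun v : Pt => v 0) hμ
  have h2' : jacOf u rs 1 0 * Real.cos θs + jacOf u rs 1 1 * Real.sin θs = μ * Real.sin θs := by
    simpa [mulVec2, ghat] using congrArg (fun v : Pt => v 1) hμ
  have hd : jacOf u rs 0 0 + jacOf u rs 1 1 = 0 := hdiv rs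
  have h2 : jacOf u rs 1 0 * Real.cos θs - jacOf u rs 0 0 * Real.sin θs = μ * Real.sin θs := by
    linear_combination h2' - Real.sin θs * hd
  have hd' : jacOf u rs 1 1 = -(jacOf u rs 0 0) := by linarith
  -- expand the triple sum
  have hsum : (∑ i : Fin 2, ∑ j : Fin 2, ∑ k : Fin 2,
      nhat θs i * ghat θs j * ghat θs k * d2 u rs i j k) =
      (Real.sin θs * (Real.cos θs * (Real.cos θs * d2 u rs 0 0 0) +
          Real.cos θs * (Real.sin θs * d2 u rs 0 0 1) +
          (Real.sin θs * (Real.cos θs * d2 u rs 0 1 0) +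
           Real.sin θs * (Real.sin θs * d2 u rs 0 1 1))) +
       -(Real.cos θs) * (Real.cos θs * (Real.cos θs * d2 u rs 1 0 0) +
          Real.cos θs * (Real.sin θs * d2 u rs 1 0 1) +
          (Real.sin θs * (Real.cos θs * d2 u rs 1 1 0) +
           Real.sin θs * (Real.sin θs * d2 u rs 1 1 1)))) := by
    simp [Fin.sum_univ_two, nhat, ghat]
    ring
  have hS : μ * μ' = 2 * μ ^ 2 - v₀ *
      (Real.sin θs * (Real.cos θs * (Real.cos θs * d2 u rs 0 0 0) +
          Real.cos θs * (Real.sin θs * d2 u rs 0 0 1) +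
          (Real.sin θs * (Real.cos θs * d2 u rs 0 1 0) +
           Real.sin θs * (Real.sin θs * d2 u rs 0 1 1))) +
       -(Real.cos θs) * (Real.cos θs * (Real.cos θs * d2 u rs 1 0 0) +
          Real.cos θs * (Real.sin θs * d2 u rs 1 0 1) +
          (Real.sin θs * (Real.cos θs * d2 u rs 1 1 0) +
           Real.sin θs * (Real.sin θs * d2 u rs 1 1 1)))) := by
    rw [hμ', hsum, mul_div_cancel₀ _ hμ0]
  set w0 : ℝ := -(Real.sin θs * (d2 u rs 0 0 0 * Real.cos θs + d2 u rs 0 0 1 * Real.sin θs)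
      - Real.cos θs * (d2 u rs 1 0 0 * Real.cos θs + d2 u rs 1 0 1 * Real.sin θs)) with hw0
  set w1 : ℝ := -(Real.sin θs * (d2 u rs 0 1 0 * Real.cos θs + d2 u rs 0 1 1 * Real.sin θs)
      - Real.cos θs * (d2 u rs 1 1 0 * Real.cos θs + d2 u rs 1 1 1 * Real.sin θs)) with hw1
  have h4 : v₀ * (Real.cos θs * w0 + Real.sin θs * w1) = μ * μ' - 2 * μ ^ 2 := by
    rw [hw0, hw1]
    linear_combination -1 * hS
  have hMeq : jac3 v₀ u (rs, θs) = Matrix.of ![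
      ![jacOf u rs 0 0, jacOf u rs 0 1, v₀ * Real.cos θs],
      ![jacOf u rs 1 0, -(jacOf u rs 0 0), v₀ * Real.sin θs],
      ![w0, w1, -(2 * μ)]] := by
    rw [jac3_eq v₀ u rs θs hu]
    funext i j
    fin_cases i <;> fin_cases j <;>
      simp [hw0, hw1, hd', Matrix.of_apply] <;>
      linear_combination (-2 * Real.cos θs) * h1 + (-2 * Real.sin θs) * h2 - 2 * μ * h3
  have hcp : (jac3 v₀ u (rs, θs)).charpoly = (X + C μ) * (X ^ 2 + C μ * X - C (μ * μ')) := by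
    rw [hMeq]
    exact charpoly_fac _ _ _ _ _ _ _ _ _ _ h3 h1 h2 h4
  intro E
  have hE : E = (((X + C μ) * (X ^ 2 + C μ * X - C (μ * μ'))).map (algebraMap ℝ ℂ)).roots := by
    show (((jac3 v₀ u (rs, θs)).charpoly).map (algebraMap ℝ ℂ)).roots = _
    rw [hcp]
  rw [hE]
  exact cubic_count μ μ'
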